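/- Let G be an abelian p-group, K a pure subgroup which is a direct sum of cyclic groups with G/K divisible, and H a finite subgroup of K. If f: H → G extends to a homomorphism K → G, then f extends to a homomorphism K → G with bounded image. -/

import Mathlib

open AddSubgroup

/-- The `p`-height of an element, as an extended natural number. -/
noncomputable def pHeight (p : ℕ) {G : Type*} [AddCommGroup G] (x : G) : ℕ∞ :=
  sSup {n : ℕ∞ | ∃ m : ℕ, n = (m : ℕ∞) ∧ ∃ y : G, p ^ m • y = x}

/-- `G` is an abelian `p`-group. -/
def IsPGrp (p : ℕ) (G : Type*) [AddCommGroup G] : Prop :=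
  ∀ x : G, ∃ n : ℕ, p ^ n • x = 0

/-- `H ∈ Q(G)`: every homomorphism `H → G` extends to an endomorphism of `G`. -/
def InQ {G : Type*} [AddCommGroup G] (H : AddSubgroup G) : Prop :=
  ∀ f : H →+ G, ∃ g : G →+ G, ∀ x : H, g x = f x

/-- `H ∈ P(G)`: every monomorphism `H → G` extends to an endomorphism of `G`. -/
def InP {G : Type*} [AddCommGroup G] (H : AddSubgroup G) : Prop :=
  ∀ f : H →+ G, Function.Injective f → ∃ g : G →+ G, ∀ x : H, g x = f x

/-- `H ∈ W(G)`: every endomorphism of `H` extends to an endomorphism of `G`. -/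
def InW {G : Type*} [AddCommGroup G] (H : AddSubgroup G) : Prop :=
  ∀ f : H →+ H, ∃ g : G →+ G, ∀ x : H, g x = (f x : G)

/-- `K` is an internal direct sum of cyclic subgroups. -/
def IsDirectSumOfCyclics {G : Type*} [AddCommGroup G] (K : AddSubgroup G) : Prop :=
  ∃ (ι : Type) (a : ι → G), (∀ i, a i ∈ K) ∧ (⨆ i, zmultiples (a i)) = K ∧
    iSupIndep (fun i => zmultiples (a i))

/-- `K` is a `p`-pure subgroup: `pⁿG ∩ K = pⁿK`. -/
def IsPure (p : ℕ) {G : Type*} [AddCommGroup G] (K : AddSubgroup G) : Prop :=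
  ∀ n : ℕ, ∀ x ∈ K, (∃ y : G, p ^ n • y = x) → ∃ z ∈ K, p ^ n • z = x

/-- The quotient `G/K` is divisible (equivalently `G = K + pG`). -/
def QuotDivisible (p : ℕ) {G : Type*} [AddCommGroup G] (K : AddSubgroup G) : Prop :=
  ∀ x : G, ∃ y : G, x - p • y ∈ K

/-- The Ulm sequence of `x` has a gap before index `k` (with `h₋₁ = -1`). -/
def HasGapBefore (p : ℕ) {G : Type*} [AddCommGroup G] (x : G) (k : ℕ) : Prop :=
  if k = 0 then 0 < pHeight p x
  else pHeight p (p ^ (k - 1) • x) + 1 < pHeight p (p ^ k • x)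




private lemma auxPartitionDisjoint {ι R M : Type*} [Ring R] [AddCommGroup M] [Module R M]
    {t : ι → Submodule R M} (ht : iSupIndep t) (P : ι → Prop) :
    Disjoint (⨆ i, ⨆ _ : P i, t i) (⨆ i, ⨆ _ : ¬ P i, t i) := by
  classical
  rw [Submodule.disjoint_def]
  intro x hx hx'
  rw [Submodule.mem_biSup_iff_exists_dfinsupp] at hx hx'
  obtain ⟨A, hA⟩ := hx
  obtain ⟨B, hB⟩ := hx'
  have hinj := ht.dfinsupp_lsum_injective
  have key : A.filter P = B.filter (fun i => ¬ P i) := hinj (hA.trans hB.symm)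
  have hz : A.filter P = 0 := by
    ext i
    by_cases hP : P i
    · simp [key, DFinsupp.filter_apply, hP]
    · simp [DFinsupp.filter_apply, hP]
  rw [← hA, hz, map_zero]

private lemma auxSpanZmult {G : Type*} [AddCommGroup G] (x : G) :
    AddSubgroup.toIntSubmodule (zmultiples x) = Submodule.span ℤ {x} := by
  ext y
  rw [← SetLike.mem_coe, AddSubgroup.coe_toIntSubmodule]
  simp [Submodule.mem_span_singleton, AddSubgroup.mem_zmultiples_iff]


theorem stmt11 {G : Type*} [AddCommGroup G] (p : ℕ) (hp : p.Prime) (hG : IsPGrp p G)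
    (K : AddSubgroup G) (hpure : IsPure p K) (hcyc : IsDirectSumOfCyclics K)
    (hdiv : QuotDivisible p K)
    (H : AddSubgroup G) (hHK : H ≤ K) (hfin : (H : Set G).Finite)
    (f : H →+ G) (g : K →+ G)
    (hext : ∀ (x : G) (hx : x ∈ H), g ⟨x, hHK hx⟩ = f ⟨x, hx⟩) :
    ∃ g' : K →+ G, (∀ (x : G) (hx : x ∈ H), g' ⟨x, hHK hx⟩ = f ⟨x, hx⟩) ∧
      ∃ m : ℕ, ∀ y : K, p ^ m • g' y = 0 := by
  classical
  obtain ⟨ι, a, haK, hsup, hindep⟩ := hcyc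
  -- transfer to `Submodule ℤ G`
  have hindepG : iSupIndep (fun i => Submodule.span ℤ {a i}) := by
    have h1 := hindep.map_orderIso AddSubgroup.toIntSubmodule
    simpa [Function.comp_def, auxSpanZmult] using h1
  have hsupG : (⨆ i, Submodule.span ℤ {a i}) = AddSubgroup.toIntSubmodule K := by
    rw [← hsup, OrderIso.map_iSup]
    simp [auxSpanZmult]
  -- the inclusion of `K` as a linear map
  set ψ : ↥K →ₗ[ℤ] G := (AddSubgroup.subtype K).toIntLinearMap with hψ
  -- the corresponding family of submodules of `↥K`
  set t : ι → Submodule ℤ ↥K := fun i => Submodule.comap ψ (Submodule.span ℤ {a i}) with ht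
  have hmem_t : ∀ (i : ι) (v : ↥K), v ∈ t i ↔ (v : G) ∈ Submodule.span ℤ {a i} :=
    fun _ _ => Iff.rfl
  have hindepK : iSupIndep t := by
    intro i
    rw [Submodule.disjoint_def]
    intro x hx hx'
    have hle : (⨆ j, ⨆ _ : j ≠ i, t j) ≤
        Submodule.comap ψ (⨆ j, ⨆ _ : j ≠ i, Submodule.span ℤ {a j}) :=
      iSup₂_le fun j hj =>
        Submodule.comap_mono (le_iSup₂ (f := fun j (_ : j ≠ i) => Submodule.span ℤ {a j}) j hj)
    have h0 : (x : G) = 0 :=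
      (Submodule.disjoint_def.mp (hindepG i)) _ hx (hle hx')
    exact Subtype.ext h0
  have hsupK : (⨆ i, t i) = ⊤ := by
    rw [eq_top_iff]
    rintro x -
    have hxm : (x : G) ∈ ⨆ i, Submodule.span ℤ {a i} := by
      rw [hsupG]; exact x.2
    rw [Submodule.mem_iSup_iff_exists_finsupp] at hxm
    obtain ⟨F, hF, hFs⟩ := hxm
    have hFK : ∀ i, F i ∈ K := fun i => by
      have : Submodule.span ℤ {a i} ≤ AddSubgroup.toIntSubmodule K := by
        rw [← hsupG]; exact le_iSup (fun j => Submodule.span ℤ {a j}) i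
      exact this (hF i)
    have hx : x = ∑ i ∈ F.support, (⟨F i, hFK i⟩ : ↥K) := by
      apply Subtype.ext
      simp only [AddSubmonoidClass.coe_finset_sum]
      simpa [Finsupp.sum] using hFs.symm
    rw [hx]
    exact Submodule.sum_mem _ fun i _ =>
      Submodule.mem_iSup_of_mem i ((hmem_t i _).mpr (hF i))
  -- choose a finite index set covering `H`
  have hHmem : ∀ x : ↥H, ∃ s : Finset ι, (⟨(x : G), hHK x.2⟩ : ↥K) ∈ ⨆ i ∈ s, t i := by
    intro x
    have : (⟨(x : G), hHK x.2⟩ : ↥K) ∈ ⨆ i, t i := hsupK ▸ Submodule.mem_top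
    rwa [Submodule.mem_iSup_iff_exists_finset] at this
  choose sfun hsfun using hHmem
  let S : Finset ι :=
    hfin.toFinset.attach.biUnion fun x => sfun ⟨x.1, (hfin.mem_toFinset).1 x.2⟩
  set P : ι → Prop := fun i => i ∈ S with hP
  set AS : Submodule ℤ ↥K := ⨆ i, ⨆ _ : P i, t i with hAS
  set BS : Submodule ℤ ↥K := ⨆ i, ⨆ _ : ¬ P i, t i with hBS
  have hHS : ∀ (x : G) (hx : x ∈ H), (⟨x, hHK hx⟩ : ↥K) ∈ AS := by
    intro x hx
    have hsub : sfun ⟨x, hx⟩ ⊆ S := by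
      intro i hi
      exact Finset.mem_biUnion.mpr
        ⟨⟨x, (hfin.mem_toFinset).2 hx⟩, Finset.mem_attach _ _, hi⟩
    have hle : (⨆ i ∈ sfun ⟨x, hx⟩, t i) ≤ AS :=
      biSup_mono fun i (hi : i ∈ sfun ⟨x, hx⟩) => hsub hi
    exact hle (hsfun ⟨x, hx⟩)
  have hc : IsCompl AS BS := by
    constructor
    · exact auxPartitionDisjoint hindepK P
    · rw [codisjoint_iff, eq_top_iff, ← hsupK]
      refine iSup_le fun i => ?_
      by_cases h : P i
      · exact (le_iSup₂ (f := fun i (_ : P i) => t i) i h).trans le_sup_left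
      · exact (le_iSup₂ (f := fun i (_ : ¬ P i) => t i) i h).trans le_sup_right
  set π := Submodule.linearProjOfIsCompl AS BS hc with hπ
  set ρ : ↥K →+ ↥K := (AS.subtype.comp π).toAddMonoidHom with hρ
  refine ⟨g.comp ρ, ?_, ?_⟩
  · intro x hx
    have hmem : (⟨x, hHK hx⟩ : ↥K) ∈ AS := hHS x hx
    have hfix : ρ ⟨x, hHK hx⟩ = ⟨x, hHK hx⟩ := by
      show AS.subtype (π ⟨x, hHK hx⟩) = _
      rw [show (⟨x, hHK hx⟩ : ↥K) = ((⟨⟨x, hHK hx⟩, hmem⟩ : AS) : ↥K) from rfl]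
      erw [Submodule.projectionOnto_apply_left hc]
      rfl
    rw [AddMonoidHom.comp_apply, hfix, hext x hx]
  · choose n hn using fun i => hG (a i)
    set m : ℕ := S.sup n with hm
    have hkill : ∀ v : ↥K, v ∈ AS → p ^ m • v = 0 := by
      intro v hv
      have hle : AS ≤ LinearMap.ker ((p ^ m : ℕ) • (LinearMap.id : ↥K →ₗ[ℤ] ↥K)) := by
        refine iSup₂_le fun i hi v' hv' => ?_
        have hni : n i ≤ m := Finset.le_sup hi
        obtain ⟨c, hc⟩ := Submodule.mem_span_singleton.mp ((hmem_t i v').mp hv')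
        have hz : p ^ m • (v' : G) = 0 := by
          rw [← hc, smul_comm, ← Nat.sub_add_cancel hni, pow_add, mul_smul, hn i,
            smul_zero, smul_zero]
        simp only [LinearMap.mem_ker, LinearMap.smul_apply, LinearMap.id_apply]
        exact Subtype.ext (by simpa using hz)
      have := hle hv
      simpa only [LinearMap.mem_ker, LinearMap.smul_apply, LinearMap.id_apply] using this
    refine ⟨m, fun y => ?_⟩
    have h1 : ((π y : ↥K)) ∈ AS := (π y).2
    have h2 : ρ y = (π y : ↥K) := rfl
    rw [AddMonoidHom.comp_apply, ← map_nsmul, h2, hkill _ h1, map_zero]
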